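/- For i ∈ {1,2,3} with complement {j,k}, the subgroups U_j = P_j⟨a_j⟩ and U_k = P_k⟨a_k⟩ satisfy U_j ∩ U_k = {1} and G = U_j × U_k, and moreover X_j X_k = P a_i. -/

import Mathlib

open scoped Pointwise

theorem stmt5 {G : Type*} [CommGroup G] [Fintype G] (p : ℕ) (hp : p.Prime) (hp5 : 5 ≤ p)
    (A P : Subgroup G) (hAP_inf : A ⊓ P = ⊥) (hAP_sup : A ⊔ P = ⊤)
    (hA_card : Nat.card A = 4) (hA_exp : ∀ x ∈ A, x ^ 2 = 1)
    (hP_card : Nat.card P = p ^ 2) (hP_exp : ∀ x ∈ P, x ^ p = 1)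
    (a : Fin 3 → G) (ha_mem : ∀ i, a i ∈ A) (ha_ne : ∀ i, a i ≠ 1)
    (ha_inj : Function.Injective a)
    (Psub : Fin 3 → Subgroup G) (hPsub_le : ∀ i, Psub i ≤ P)
    (hPsub_card : ∀ i, Nat.card (Psub i) = p) (hPsub_inj : Function.Injective Psub)
    (i j k : Fin 3) (hij : i ≠ j) (hki : k ≠ i) (hkj : k ≠ j) :
    (Psub j ⊔ Subgroup.zpowers (a j)) ⊓ (Psub k ⊔ Subgroup.zpowers (a k)) = ⊥ ∧
    (Psub j ⊔ Subgroup.zpowers (a j)) ⊔ (Psub k ⊔ Subgroup.zpowers (a k)) = ⊤ ∧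
    ((Psub j : Set G) * {a j}) * ((Psub k : Set G) * {a k}) = (P : Set G) * {a i} := by
  have hjk : j ≠ k := fun h => hkj h.symm
  have horder : ∀ m, orderOf (a m) = 2 := fun m =>
    orderOf_eq_prime (hA_exp _ (ha_mem m)) (ha_ne m)
  have hzA : ∀ m, Subgroup.zpowers (a m) ≤ A := fun m =>
    Subgroup.zpowers_le.mpr (ha_mem m)
  have hane : ∀ m n : Fin 3, m ≠ n → a m ≠ a n := fun m n h e => h (ha_inj e)
  -- a n ∉ zpowers (a m) for m ≠ n
  have hz_nmem : ∀ m n : Fin 3, m ≠ n → a n ∉ Subgroup.zpowers (a m) := by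
    intro m n hmn hmem
    obtain ⟨r, hr⟩ := mem_powers_iff_mem_zpowers.mpr hmem
    simp only [] at hr
    rw [← pow_mod_orderOf, horder m] at hr
    rcases Nat.mod_two_eq_zero_or_one r with h2 | h2 <;> rw [h2] at hr
    · exact ha_ne n (by simpa using hr.symm)
    · exact hane m n hmn (by simpa using hr)
  -- intersections of the zpowers
  have hz_inf : Subgroup.zpowers (a j) ⊓ Subgroup.zpowers (a k) = ⊥ := by
    have hdvd : Nat.card (Subgroup.zpowers (a j) ⊓ Subgroup.zpowers (a k) : Subgroup G) ∣ 2 := by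
      have := Subgroup.card_dvd_of_le
        (inf_le_left : Subgroup.zpowers (a j) ⊓ Subgroup.zpowers (a k) ≤ _)
      rwa [Nat.card_zpowers, horder j] at this
    rcases (Nat.prime_two.eq_one_or_self_of_dvd _ hdvd) with h1 | h1
    · exact Subgroup.card_eq_one.mp h1
    · exfalso
      have he : Subgroup.zpowers (a j) ⊓ Subgroup.zpowers (a k) = Subgroup.zpowers (a j) :=
        Subgroup.eq_of_le_of_card_ge inf_le_left (by rw [h1, Nat.card_zpowers, horder j])
      have hjin : a j ∈ Subgroup.zpowers (a k) := by
        have h := Subgroup.mem_zpowers (a j)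
        rw [← he] at h
        exact (Subgroup.mem_inf.mp h).2
      exact hz_nmem k j hkj hjin
  -- intersection of the Psub's
  have hP_inf : Psub j ⊓ Psub k = ⊥ := by
    have hdvd : Nat.card (Psub j ⊓ Psub k : Subgroup G) ∣ p := by
      have := Subgroup.card_dvd_of_le (inf_le_left : Psub j ⊓ Psub k ≤ Psub j)
      rwa [hPsub_card j] at this
    rcases hp.eq_one_or_self_of_dvd _ hdvd with h1 | h1
    · exact Subgroup.card_eq_one.mp h1
    · exfalso
      have hej : Psub j ⊓ Psub k = Psub j :=
        Subgroup.eq_of_le_of_card_ge inf_le_left (by rw [h1, hPsub_card j])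
      have hek : Psub j ⊓ Psub k = Psub k :=
        Subgroup.eq_of_le_of_card_ge inf_le_right (by rw [h1, hPsub_card k])
      exact hjk (hPsub_inj (hej.symm.trans hek))
  -- sup of the Psub's is P
  have hP_sup : Psub j ⊔ Psub k = P := by
    have hle : Psub j ⊔ Psub k ≤ P := sup_le (hPsub_le j) (hPsub_le k)
    have hd2 : Nat.card (Psub j ⊔ Psub k : Subgroup G) ∣ p ^ 2 :=
      hP_card ▸ Subgroup.card_dvd_of_le hle
    obtain ⟨m, hm2, hmeq⟩ := (Nat.dvd_prime_pow hp).mp hd2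
    have hpd : p ∣ Nat.card (Psub j ⊔ Psub k : Subgroup G) :=
      hPsub_card j ▸ Subgroup.card_dvd_of_le le_sup_left
    interval_cases m
    · rw [pow_zero] at hmeq
      rw [hmeq] at hpd
      have := Nat.dvd_one.mp hpd
      omega
    · exfalso
      rw [pow_one] at hmeq
      have hej : Psub j = Psub j ⊔ Psub k :=
        Subgroup.eq_of_le_of_card_ge le_sup_left (by rw [hmeq, hPsub_card j])
      have hek : Psub k = Psub j ⊔ Psub k :=
        Subgroup.eq_of_le_of_card_ge le_sup_right (by rw [hmeq, hPsub_card k])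
      exact hjk (hPsub_inj (hej.trans hek.symm))
    · exact Subgroup.eq_of_le_of_card_ge hle (by rw [hmeq, hP_card])
  -- the range of a is exactly A minus the identity
  have hArange : (A : Set G) \ {1} = Set.range a := by
    have hsub : Set.range a ⊆ (A : Set G) \ {1} := by
      rintro x ⟨m, rfl⟩; exact ⟨ha_mem m, ha_ne m⟩
    refine (Set.eq_of_subset_of_ncard_le hsub ?_ (Set.toFinite _)).symm
    have h1 : (Set.range a).ncard = 3 := by
      rw [← Nat.card_coe_set_eq, Nat.card_range_of_injective ha_inj,
        Nat.card_eq_fintype_card, Fintype.card_fin]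
    have h2 : ((A : Set G) \ {1}).ncard = 3 := by
      rw [Set.ncard_diff_singleton_of_mem (one_mem A)]
      have : (A : Set G).ncard = 4 := by
        rw [← Nat.card_coe_set_eq]; exact hA_card
      omega
    rw [h1, h2]
  -- a j * a k = a i
  have haijk : a j * a k = a i := by
    have hmem : a j * a k ∈ (A : Set G) \ {1} := by
      refine ⟨mul_mem (ha_mem j) (ha_mem k), ?_⟩
      intro h
      have hkk : a k * a k = 1 := by
        have := hA_exp _ (ha_mem k); rwa [pow_two] at this
      have : a j = a k := by
        have h1 : a j = (a k)⁻¹ := eq_inv_of_mul_eq_one_left h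
        rw [h1, inv_eq_of_mul_eq_one_right hkk]
      exact hane j k hjk this
    rw [hArange] at hmem
    obtain ⟨m, hm⟩ := hmem
    have hmj : m ≠ j := by
      rintro rfl
      exact ha_ne k (by simpa using hm.symm)
    have hmk : m ≠ k := by
      rintro rfl
      rw [mul_comm] at hm
      exact ha_ne j (by simpa using hm.symm)
    have hfin : ∀ x y z w : Fin 3, x ≠ y → z ≠ x → z ≠ y → w ≠ y → w ≠ z → w = x := by
      decide
    have hmi : m = i := hfin i j k m hij hki hkj hmj hmk
    rw [← hm, hmi]
  -- membership helper
  have hPA : ∀ {x : G}, x ∈ P → x ∈ A → x = 1 := fun hxP hxA =>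
    Subgroup.mem_bot.mp (hAP_inf ▸ Subgroup.mem_inf.mpr ⟨hxA, hxP⟩)
  refine ⟨?_, ?_, ?_⟩
  · -- trivial intersection
    ext x
    simp only [Subgroup.mem_inf, Subgroup.mem_bot]
    constructor
    · rintro ⟨hx1, hx2⟩
      rw [Subgroup.mem_sup] at hx1 hx2
      obtain ⟨u, hu, y, hy, rfl⟩ := hx1
      obtain ⟨v, hv, z, hz, hvz⟩ := hx2
      have h1 : u * v⁻¹ = z * y⁻¹ := by
        rw [← div_eq_mul_inv, ← div_eq_mul_inv]
        exact div_eq_div_iff_mul_eq_mul.mpr (hvz.symm.trans (mul_comm v z))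
      have hP1 : u * v⁻¹ ∈ P := mul_mem (hPsub_le j hu) (inv_mem (hPsub_le k hv))
      have hA1 : z * y⁻¹ ∈ A := mul_mem (hzA k hz) (inv_mem (hzA j hy))
      have hzy : z * y⁻¹ = 1 := hPA (h1 ▸ hP1) hA1
      have huv : u * v⁻¹ = 1 := h1.trans hzy ▸ rfl
      have huv' : u = v := by
        have := huv; rwa [mul_inv_eq_one] at this
      have hzy' : z = y := by
        have := hzy; rwa [mul_inv_eq_one] at this
      have hu1 : u = 1 := by
        have : u ∈ Psub j ⊓ Psub k := Subgroup.mem_inf.mpr ⟨hu, huv' ▸ hv⟩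
        rw [hP_inf] at this; exact Subgroup.mem_bot.mp this
      have hy1 : y = 1 := by
        have : y ∈ Subgroup.zpowers (a j) ⊓ Subgroup.zpowers (a k) :=
          Subgroup.mem_inf.mpr ⟨hy, hzy' ▸ hz⟩
        rw [hz_inf] at this; exact Subgroup.mem_bot.mp this
      rw [hu1, hy1, mul_one]
    · rintro rfl
      exact ⟨one_mem _, one_mem _⟩
  · -- sup is top
    rw [eq_top_iff, ← hAP_sup, sup_le_iff]
    constructor
    · intro x hx
      by_cases hx1 : x = 1
      · exact hx1 ▸ one_mem _
      · have : x ∈ (A : Set G) \ {1} := ⟨hx, hx1⟩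
        rw [hArange] at this
        obtain ⟨m, rfl⟩ := this
        have hmem_j : a j ∈ (Psub j ⊔ Subgroup.zpowers (a j)) ⊔
            (Psub k ⊔ Subgroup.zpowers (a k)) :=
          Subgroup.mem_sup_left (Subgroup.mem_sup_right (Subgroup.mem_zpowers (a j)))
        have hmem_k : a k ∈ (Psub j ⊔ Subgroup.zpowers (a j)) ⊔
            (Psub k ⊔ Subgroup.zpowers (a k)) :=
          Subgroup.mem_sup_right (Subgroup.mem_sup_right (Subgroup.mem_zpowers (a k)))
        have hfin2 : ∀ x y z w : Fin 3, x ≠ y → z ≠ x → z ≠ y →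
            w = x ∨ w = y ∨ w = z := by decide
        have hcases : m = i ∨ m = j ∨ m = k := hfin2 i j k m hij hki hkj
        rcases hcases with rfl | rfl | rfl
        · rw [← haijk]; exact mul_mem hmem_j hmem_k
        · exact hmem_j
        · exact hmem_k
    · intro x hx
      rw [← hP_sup] at hx
      have : Psub j ⊔ Psub k ≤ (Psub j ⊔ Subgroup.zpowers (a j)) ⊔
          (Psub k ⊔ Subgroup.zpowers (a k)) :=
        sup_le (le_sup_left.trans le_sup_left) (le_sup_left.trans le_sup_right)
      exact this hx
  · -- product of cosets
    have hPP : (Psub j : Set G) * (Psub k : Set G) = (P : Set G) := by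
      rw [← Subgroup.mul_normal, hP_sup]
    have hsingle : ({a j} : Set G) * {a k} = {a i} := by
      rw [Set.singleton_mul_singleton, haijk]
    rw [mul_mul_mul_comm, hPP, hsingle]
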